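/- Let C ⊆ F_{q^m}^n be an almost affine rank-metric code. Then the function ρ_C(V) = log_{q^m} |π_V(C)| on subspaces V ≤ F_q^n satisfies the q-matroid rank axioms, i.e., (F_q^n, ρ_C) is a q-matroid. -/

import Mathlib

open Submodule Module

variable (K L : Type) [Field K] [Fintype K] [Field L] [Fintype L] [Algebra K L]

/-- Orthogonal complement w.r.t. the standard dot product on `ι → K`. -/
def stdPerp {ι : Type} [Fintype ι] (V : Submodule K (ι → K)) : Submodule K (ι → K) where
  carrier := {w | ∀ v ∈ V, ∑ j, v j * w j = 0}
  zero_mem' := by intro v hv; simp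
  add_mem' := by
    intro a b ha hb v hv
    simp [Pi.add_apply, mul_add, Finset.sum_add_distrib, ha v hv, hb v hv]
  smul_mem' := by
    intro c a ha v hv
    simp only [Pi.smul_apply, smul_eq_mul, mul_left_comm]
    rw [← Finset.mul_sum, ha v hv, mul_zero]

/-- Extension of scalars: the `L`-span of a `K`-subspace of `ι → K` inside `ι → L`. -/
def extScalars {ι : Type} (W : Submodule K (ι → K)) : Submodule L (ι → L) :=
  Submodule.span L ((fun (w : ι → K) (j : ι) => algebraMap K L (w j)) '' (W : Set (ι → K)))

/-- Image of the code `C` under the canonical projection `π_V`. -/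
def projImage {ι : Type} [Fintype ι] (C : Set (ι → L)) (V : Submodule K (ι → K)) :
    Set ((ι → L) ⧸ extScalars K L (stdPerp K V)) :=
  Submodule.Quotient.mk '' C

/-- The rank function induced by a code: `ρ_C(V) = log_{q^m} |π_V(C)|`. -/
noncomputable def rho {ι : Type} [Fintype ι] (C : Set (ι → L)) (V : Submodule K (ι → K)) : ℕ :=
  Nat.log (Fintype.card L) (Nat.card (projImage K L C V))

/-- `C` is an almost affine rank-metric code. -/
def AlmostAffine {ι : Type} [Fintype ι] (C : Set (ι → L)) : Prop :=
  ∀ V : Submodule K (ι → K), ∃ e : ℕ, Nat.card (projImage K L C V) = (Fintype.card L) ^ e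

/-- Support of a vector `v ∈ L^ι` w.r.t. a `K`-basis `B` of `L`. -/
def supp {ι : Type} {m : ℕ} (B : Basis (Fin m) K L) (v : ι → L) : Submodule K (ι → K) :=
  Submodule.span K (Set.range fun i : Fin m => fun j : ι => B.repr (v j) i)

/-- The subcode `C(Z,x) = {c ∈ C : π_Z(c) = π_Z(x)}`. -/
def subcode {ι : Type} [Fintype ι] (C : Set (ι → L)) (Z : Submodule K (ι → K)) (x : ι → L) :
    Set (ι → L) :=
  {c ∈ C | (Submodule.Quotient.mk (p := extScalars K L (stdPerp K Z)) c) =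
      Submodule.Quotient.mk x}

section Count
variable {α β : Type}

lemma nat_card_eq_sum_fibers [Finite α] (A : Set α) (p : α → β) :
    Nat.card A = ∑ b ∈ (A.toFinite.image p).toFinset, Nat.card {a | a ∈ A ∧ p a = b} := by
  classical
  have hA : A.Finite := Set.toFinite A
  rw [Nat.card_coe_set_eq, Set.ncard_eq_toFinset_card A hA]
  rw [Finset.card_eq_sum_card_fiberwise (t := (A.toFinite.image p).toFinset) (f := p)
    (fun a ha => by
      simp only [Finset.mem_coe, Set.Finite.mem_toFinset] at ha ⊢
      exact ⟨a, ha, rfl⟩)]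
  apply Finset.sum_congr rfl
  intro b hb
  have hfin : {a | a ∈ A ∧ p a = b}.Finite := hA.subset (fun a ha => ha.1)
  rw [Nat.card_coe_set_eq, Set.ncard_eq_toFinset_card _ hfin]
  congr 1
  ext a
  simp [Set.Finite.mem_toFinset]

lemma nat_card_eq_mul_of_uniform [Finite α] (A : Set α) (p : α → β) (f : ℕ)
    (hf : ∀ b ∈ p '' A, Nat.card {a | a ∈ A ∧ p a = b} = f) :
    Nat.card A = Nat.card (p '' A) * f := by
  rw [nat_card_eq_sum_fibers A p,
    Finset.sum_congr rfl (fun b hb => hf b (by simpa using hb)),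
    Finset.sum_const, smul_eq_mul]
  congr 1
  rw [Nat.card_coe_set_eq, Set.ncard_eq_toFinset_card _ (A.toFinite.image p)]

lemma natcard_subset [Finite α] {s t : Set α} (h : s ⊆ t) : Nat.card s ≤ Nat.card t := by
  rw [Nat.card_coe_set_eq, Nat.card_coe_set_eq]
  exact Set.ncard_le_ncard h t.toFinite

lemma natcard_prod (X : Set α) (Y : Set β) :
    Nat.card ↥(X ×ˢ Y) = Nat.card X * Nat.card Y := by
  rw [Nat.card_congr (Equiv.Set.prod X Y), Nat.card_prod]

end Count

section Aux
set_option linter.unusedSectionVars false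
variable {K L : Type} [Field K] [Fintype K] [Field L] [Fintype L] [Algebra K L]
variable {ι : Type} [Fintype ι]

lemma extScalars_mono {A B : Submodule K (ι → K)} (h : A ≤ B) :
    extScalars K L A ≤ extScalars K L B :=
  span_mono (Set.image_mono h)

lemma stdPerp_anti {V W : Submodule K (ι → K)} (h : V ≤ W) :
    stdPerp K W ≤ stdPerp K V :=
  fun w hw v hv => hw v (h hv)

lemma stdPerp_sup (V W : Submodule K (ι → K)) :
    stdPerp K (V ⊔ W) = stdPerp K V ⊓ stdPerp K W := by
  apply le_antisymm
  · exact le_inf (stdPerp_anti le_sup_left) (stdPerp_anti le_sup_right)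
  · rintro w ⟨h1, h2⟩ v hv
    rcases mem_sup.mp hv with ⟨y, hy, z, hz, rfl⟩
    have : ∀ j, (y + z) j * w j = y j * w j + z j * w j := by
      intro j; simp [add_mul]
    rw [Finset.sum_congr rfl fun j _ => this j, Finset.sum_add_distrib, h1 y hy, h2 z hz,
      add_zero]

lemma extScalars_sup (A B : Submodule K (ι → K)) :
    extScalars K L (A ⊔ B) = extScalars K L A ⊔ extScalars K L B := by
  apply le_antisymm
  · rw [extScalars, span_le]
    rintro x ⟨v, hv, rfl⟩
    rcases mem_sup.mp hv with ⟨y, hy, z, hz, rfl⟩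
    have : (fun (w : ι → K) (j : ι) => algebraMap K L (w j)) (y + z) =
        (fun j => algebraMap K L (y j)) + (fun j => algebraMap K L (z j)) := by
      ext j; simp
    rw [SetLike.mem_coe, this]
    exact add_mem (le_sup_left (α := Submodule L (ι → L))
        (Submodule.subset_span ⟨y, hy, rfl⟩))
      (le_sup_right (α := Submodule L (ι → L)) (Submodule.subset_span ⟨z, hz, rfl⟩))
  · exact sup_le (extScalars_mono le_sup_left) (extScalars_mono le_sup_right)

lemma li_ext {r : ℕ} {w : Fin r → ι → K} (h : LinearIndependent K w) :
    LinearIndependent L (fun i => fun j : ι => algebraMap K L (w i j)) := by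
  haveI : Module.Finite K L := Module.finite_iff_finite.mpr inferInstance
  let b := Module.finBasis K L
  rw [Fintype.linearIndependent_iff] at h ⊢
  intro g hg i
  have key : ∀ t, ∀ j, ∑ i, w i j * b.repr (g i) t = 0 := by
    intro t j
    have hj := congrFun hg j
    simp only [Finset.sum_apply, Pi.smul_apply, smul_eq_mul, Pi.zero_apply] at hj
    have hj' : ∑ i, w i j • g i = 0 := by
      rw [← hj]; congr 1; ext i; rw [Algebra.smul_def, mul_comm]
    have := congrArg (fun x => b.repr x t) hj'
    simpa [Finsupp.smul_apply] using this
  have : ∀ t, b.repr (g i) t = 0 := by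
    intro t
    have h0 : ∑ i, (b.repr (g i) t) • w i = 0 := by
      ext j
      simpa [mul_comm] using key t j
    exact h _ h0 i
  have : b.repr (g i) = 0 := Finsupp.ext this
  simpa using congrArg b.repr.symm this

lemma extScalars_eq_span (W : Submodule K (ι → K)) :
    extScalars K L W =
      span L (Set.range fun i : Fin (finrank K W) =>
        fun j : ι => algebraMap K L ((finBasis K W i : ι → K) j)) := by
  apply le_antisymm
  · rw [extScalars, span_le]
    rintro x ⟨v, hv, rfl⟩
    have hrep : (⟨v, hv⟩ : W) = ∑ i, (finBasis K W).repr ⟨v, hv⟩ i • finBasis K W i :=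
      ((finBasis K W).sum_repr ⟨v, hv⟩).symm
    have hv' : v = ∑ i, (finBasis K W).repr ⟨v, hv⟩ i • (finBasis K W i : ι → K) := by
      have := congrArg (Subtype.val) hrep
      simp only [Submodule.coe_sum, Submodule.coe_smul] at this
      exact this
    have : (fun j => algebraMap K L (v j)) =
        ∑ i, (algebraMap K L ((finBasis K W).repr ⟨v, hv⟩ i)) •
          (fun j => algebraMap K L ((finBasis K W i : ι → K) j)) := by
      ext j
      rw [congrFun hv' j]
      simp [Finset.sum_apply, map_sum, Algebra.smul_def]
    have hx : (fun (w : ι → K) (j : ι) => algebraMap K L (w j)) v =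
        ∑ i, (algebraMap K L ((finBasis K W).repr ⟨v, hv⟩ i)) •
          (fun j => algebraMap K L ((finBasis K W i : ι → K) j)) := this
    rw [SetLike.mem_coe, hx]
    exact Submodule.sum_mem _ fun i _ => Submodule.smul_mem _ _
      (Submodule.subset_span (Set.mem_range_self i))
  · rw [span_le]
    rintro x ⟨i, rfl⟩
    exact Submodule.subset_span ⟨(finBasis K W i : ι → K), (finBasis K W i).2, rfl⟩

lemma finrank_extScalars (W : Submodule K (ι → K)) :
    finrank L (extScalars K L W) = finrank K W := by
  rw [extScalars_eq_span]
  have hli : LinearIndependent K (fun i : Fin (finrank K W) => (finBasis K W i : ι → K)) :=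
    (finBasis K W).linearIndependent.map' W.subtype (ker_subtype W)
  have := li_ext (L := L) hli
  rw [finrank_span_eq_card this, Fintype.card_fin]

noncomputable def dotForm : LinearMap.BilinForm K (ι → K) :=
  LinearMap.mk₂ K (fun v w => ∑ j, v j * w j)
    (fun a b c => by simp [add_mul, Finset.sum_add_distrib])
    (fun a b c => by simp [Finset.mul_sum, mul_assoc])
    (fun a b c => by simp [mul_add, Finset.sum_add_distrib])
    (fun a b c => by simp [Finset.mul_sum, mul_left_comm])

lemma dotForm_apply (v w : ι → K) : dotForm v w = ∑ j, v j * w j := rfl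

lemma dotForm_refl : (dotForm (K := K) (ι := ι)).IsRefl := by
  intro v w h
  rw [dotForm_apply] at h ⊢
  rw [← h]
  exact Finset.sum_congr rfl fun j _ => mul_comm _ _

lemma dotForm_nondegenerate : (dotForm (K := K) (ι := ι)).Nondegenerate := by
  classical
  refine ⟨fun v h => ?_, fun v h => ?_⟩
  · ext j
    have := h (Pi.single j 1)
    rw [dotForm_apply] at this
    simpa [Pi.single_apply, mul_ite, Finset.sum_ite_eq'] using this
  · ext j
    have := h (Pi.single j 1)
    rw [dotForm_apply] at this
    simpa [Pi.single_apply, ite_mul, Finset.sum_ite_eq'] using this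

lemma stdPerp_eq_orthogonal (V : Submodule K (ι → K)) :
    stdPerp K V = dotForm.orthogonal V := by
  ext w
  constructor
  · intro hw v hv
    exact hw v hv
  · intro hw v hv
    exact hw v hv

lemma finrank_stdPerp (V : Submodule K (ι → K)) :
    finrank K V + finrank K (stdPerp K V) = Fintype.card ι := by
  rw [stdPerp_eq_orthogonal,
    LinearMap.BilinForm.finrank_orthogonal dotForm_nondegenerate]
  have h1 : finrank K V ≤ finrank K (ι → K) := finrank_le V
  rw [finrank_fintype_fun_eq_card] at *
  omega

lemma extScalars_inf (A B : Submodule K (ι → K)) :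
    extScalars K L (A ⊓ B) = extScalars K L A ⊓ extScalars K L B := by
  have hle : extScalars K L (A ⊓ B) ≤ extScalars K L A ⊓ extScalars K L B :=
    le_inf (extScalars_mono inf_le_left) (extScalars_mono inf_le_right)
  refine eq_of_le_of_finrank_le hle ?_
  have h1 := Submodule.finrank_sup_add_finrank_inf_eq (extScalars K L A) (extScalars K L B)
  have h2 := Submodule.finrank_sup_add_finrank_inf_eq A B
  rw [← extScalars_sup, finrank_extScalars, finrank_extScalars, finrank_extScalars] at h1
  rw [finrank_extScalars]
  omega

lemma finrank_E_add (V : Submodule K (ι → K)) :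
    finrank K V + finrank L (extScalars K L (stdPerp K V)) = Fintype.card ι := by
  rw [finrank_extScalars]
  exact finrank_stdPerp V

lemma E_sup_eq (V W : Submodule K (ι → K)) :
    extScalars K L (stdPerp K (V ⊔ W)) =
      extScalars K L (stdPerp K V) ⊓ extScalars K L (stdPerp K W) := by
  rw [stdPerp_sup, extScalars_inf]

noncomputable def qmap {T V : Submodule K (ι → K)} (h : T ≤ V) :
    ((ι → L) ⧸ extScalars K L (stdPerp K V)) →ₗ[L] ((ι → L) ⧸ extScalars K L (stdPerp K T)) :=
  Submodule.mapQ _ _ LinearMap.id (fun _ hx => extScalars_mono (stdPerp_anti h) hx)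

lemma qmap_mk {T V : Submodule K (ι → K)} (h : T ≤ V) (x : ι → L) :
    qmap (L := L) h (Submodule.Quotient.mk x) = Submodule.Quotient.mk x := by
  simp [qmap, Submodule.mapQ_apply]

lemma qmap_surjective {T V : Submodule K (ι → K)} (h : T ≤ V) :
    Function.Surjective (qmap (K := K) (L := L) h) := by
  intro y
  obtain ⟨x, rfl⟩ := Submodule.Quotient.mk_surjective _ y
  exact ⟨Submodule.Quotient.mk x, qmap_mk h x⟩

lemma finrank_quot (V : Submodule K (ι → K)) :
    finrank L ((ι → L) ⧸ extScalars K L (stdPerp K V)) = finrank K V := by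
  have h1 := Submodule.finrank_quotient_add_finrank (extScalars K L (stdPerp K V))
  have h2 := finrank_E_add (L := L) V
  have h3 : finrank L (ι → L) = Fintype.card ι := finrank_fintype_fun_eq_card L
  omega

lemma finrank_ker_qmap {T V : Submodule K (ι → K)} (h : T ≤ V) :
    finrank L (LinearMap.ker (qmap (K := K) (L := L) h)) + finrank K T = finrank K V := by
  have h1 := LinearMap.finrank_range_add_finrank_ker (qmap (K := K) (L := L) h)
  rw [LinearMap.range_eq_top.mpr (qmap_surjective h), finrank_top, finrank_quot,
    finrank_quot] at h1
  omega

lemma nat_card_module (M : Type) [AddCommGroup M] [Module L M] [Finite M] :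
    Nat.card M = Fintype.card L ^ finrank L M := by
  have : Fintype M := Fintype.ofFinite M
  rw [Nat.card_eq_fintype_card]
  exact card_eq_pow_finrank

lemma qmap_image {T V : Submodule K (ι → K)} (h : T ≤ V) (C : Set (ι → L)) :
    qmap (L := L) h '' projImage K L C V = projImage K L C T := by
  rw [projImage, projImage, Set.image_image]
  exact Set.image_congr fun c _ => qmap_mk h c

lemma fiber_eq_C {U V : Submodule K (ι → K)} (hUV : U ≤ V) (C : Set (ι → L))
    {c' : ι → L} (hc' : c' ∈ C) :
    {x | x ∈ projImage K L C V ∧ qmap (L := L) hUV x = Submodule.Quotient.mk c'} =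
      projImage K L (subcode K L C U c') V := by
  ext x
  constructor
  · rintro ⟨⟨d, hd, rfl⟩, hx⟩
    rw [qmap_mk] at hx
    exact ⟨d, ⟨hd, hx⟩, rfl⟩
  · rintro ⟨d, ⟨hd, hdq⟩, rfl⟩
    exact ⟨⟨d, hd, rfl⟩, by rw [qmap_mk]; exact hdq⟩

lemma subcode_subset {T U : Submodule K (ι → K)} (hTU : T ≤ U) (C : Set (ι → L))
    {c c' : ι → L} (hc' : c' ∈ subcode K L C T c) :
    subcode K L C U c' ⊆ subcode K L C T c := by
  rintro d ⟨hd, hdq⟩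
  refine ⟨hd, ?_⟩
  have h2 := congrArg (qmap (L := L) hTU) hdq
  rw [qmap_mk, qmap_mk] at h2
  rw [h2]
  exact hc'.2

lemma fiber_eq_sub {T U V : Submodule K (ι → K)} (hTU : T ≤ U) (hUV : U ≤ V)
    (C : Set (ι → L)) {c c' : ι → L} (hc' : c' ∈ subcode K L C T c) :
    {x | x ∈ projImage K L (subcode K L C T c) V ∧ qmap (L := L) hUV x = Submodule.Quotient.mk c'} =
      projImage K L (subcode K L C U c') V := by
  ext x
  constructor
  · rintro ⟨⟨d, hd, rfl⟩, hx⟩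
    rw [qmap_mk] at hx
    exact ⟨d, ⟨hd.1, hx⟩, rfl⟩
  · rintro ⟨d, hd, rfl⟩
    have hdT := subcode_subset hTU C hc' hd
    exact ⟨⟨d, hdT, rfl⟩, by rw [qmap_mk]; exact hd.2⟩

lemma hyperplane_step (C : Set (ι → L)) (hC : AlmostAffine K L C)
    {T U : Submodule K (ι → K)} (hTU : T ≤ U) (hdim : finrank K U ≤ finrank K T + 1)
    {c : ι → L} (hc : c ∈ C) :
    Nat.card (projImage K L C T) * Nat.card (projImage K L (subcode K L C T c) U) =
      Nat.card (projImage K L C U) := by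
  classical
  have hq : 1 < Fintype.card L := Fintype.one_lt_card
  set q := Fintype.card L with hqdef
  set A : Set ((ι → L) ⧸ extScalars K L (stdPerp K U)) := projImage K L C U with hA
  set p : ((ι → L) ⧸ extScalars K L (stdPerp K U)) → ((ι → L) ⧸ extScalars K L (stdPerp K T)) :=
    ⇑(qmap (L := L) hTU) with hp
  have himg : p '' A = projImage K L C T := qmap_image hTU C
  set B := (A.toFinite.image p).toFinset with hB
  have hmemB : ∀ b, b ∈ B ↔ b ∈ p '' A := by
    intro b; rw [hB, Set.Finite.mem_toFinset]
  -- fiber cardinalities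
  set fib : _ → ℕ := fun b => Nat.card {a | a ∈ A ∧ p a = b} with hfibdef
  have h_lower : ∀ b ∈ B, 1 ≤ fib b := by
    intro b hb
    rw [hmemB] at hb
    obtain ⟨a, ha, rfl⟩ := hb
    have : Nonempty {x | x ∈ A ∧ p x = p a} := ⟨⟨a, ha, rfl⟩⟩
    exact Nat.one_le_iff_ne_zero.mpr (Nat.card_ne_zero.mpr ⟨this, Set.toFinite _⟩)
  have hker1 : finrank L (LinearMap.ker (qmap (K := K) (L := L) hTU)) ≤ 1 := by
    have := finrank_ker_qmap (L := L) hTU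
    omega
  have hkcard : Nat.card (LinearMap.ker (qmap (K := K) (L := L) hTU)) ≤ q := by
    rw [nat_card_module (L := L)]
    calc q ^ finrank L (LinearMap.ker (qmap (K := K) (L := L) hTU)) ≤ q ^ 1 :=
          Nat.pow_le_pow_right (le_of_lt hq) hker1
      _ = q := pow_one q
  have h_upper : ∀ b ∈ B, fib b ≤ q := by
    intro b hb
    rw [hmemB] at hb
    obtain ⟨a, ha, rfl⟩ := hb
    refine le_trans (Nat.card_le_card_of_injective
      (fun y : {x | x ∈ A ∧ p x = p a} =>
        (⟨y.1 - a, by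
          have h1 : qmap (L := L) hTU y.1 = p a := y.2.2
          simp only [LinearMap.mem_ker, map_sub]
          rw [h1, sub_self]⟩ : LinearMap.ker (qmap (K := K) (L := L) hTU)))
      ?_) hkcard
    intro y z hyz
    have := congrArg Subtype.val hyz
    simp only [sub_left_inj] at this
    exact Subtype.ext this
  obtain ⟨eU, hEU⟩ := hC U
  obtain ⟨eT, hET⟩ := hC T
  have hBcard : B.card = q ^ eT := by
    rw [hB, ← Set.ncard_eq_toFinset_card _ (A.toFinite.image p), ← Nat.card_coe_set_eq,
      himg, hET]
  have hsum : q ^ eU = ∑ b ∈ B, fib b := by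
    rw [← hEU]
    exact nat_card_eq_sum_fibers A p
  have hTle : q ^ eT ≤ q ^ eU := by
    calc q ^ eT = ∑ _b ∈ B, 1 := by rw [Finset.sum_const, smul_eq_mul, mul_one, hBcard]
      _ ≤ ∑ b ∈ B, fib b := Finset.sum_le_sum h_lower
      _ = q ^ eU := hsum.symm
  have heTU : eT ≤ eU := (Nat.pow_le_pow_iff_right hq).mp hTle
  have hUle : q ^ eU ≤ q ^ (eT + 1) := by
    calc q ^ eU = ∑ b ∈ B, fib b := hsum
      _ ≤ ∑ _b ∈ B, q := Finset.sum_le_sum h_upper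
      _ = q ^ (eT + 1) := by rw [Finset.sum_const, smul_eq_mul, hBcard, pow_succ]
  have heU1 : eU ≤ eT + 1 := (Nat.pow_le_pow_iff_right hq).mp hUle
  have hfib : ∀ b ∈ B, fib b = q ^ (eU - eT) := by
    intro b hb
    have hcases : eU = eT ∨ eU = eT + 1 := by omega
    rcases hcases with hcase | hcase
    · have : eU - eT = 0 := by omega
      rw [this, pow_zero]
      by_contra hne
      have hlt : 1 < fib b := lt_of_le_of_ne (h_lower b hb) (Ne.symm hne)
      have : (∑ _b ∈ B, 1) < ∑ b ∈ B, fib b :=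
        Finset.sum_lt_sum h_lower ⟨b, hb, hlt⟩
      rw [Finset.sum_const, smul_eq_mul, mul_one, hBcard, ← hsum, hcase] at this
      exact lt_irrefl _ this
    · have heq1 : eU - eT = 1 := by omega
      rw [heq1, pow_one]
      by_contra hne
      have hlt : fib b < q := lt_of_le_of_ne (h_upper b hb) hne
      have : (∑ b ∈ B, fib b) < ∑ _b ∈ B, q :=
        Finset.sum_lt_sum h_upper ⟨b, hb, hlt⟩
      rw [Finset.sum_const, smul_eq_mul, hBcard, ← pow_succ, ← hsum, hcase] at this
      exact lt_irrefl _ this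
  have hbmem : (Submodule.Quotient.mk c : (ι → L) ⧸ extScalars K L (stdPerp K T)) ∈ B := by
    rw [hmemB]
    exact ⟨Submodule.Quotient.mk c, ⟨c, hc, rfl⟩, qmap_mk hTU c⟩
  have hfibc := hfib _ hbmem
  have hfeq : fib (Submodule.Quotient.mk c) =
      Nat.card (projImage K L (subcode K L C T c) U) := by
    have hseteq : {a | a ∈ A ∧ p a = Submodule.Quotient.mk c} =
        projImage K L (subcode K L C T c) U := fiber_eq_C hTU C hc
    simp only [hfibdef]
    rw [hseteq]
  rw [hET, hEU, ← hfeq, hfibc, ← pow_add]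
  congr 1
  omega

instance quotFinite (V : Submodule K (ι → K)) :
    Finite ((ι → L) ⧸ extScalars K L (stdPerp K V)) :=
  Quotient.finite _

lemma fiber_main (C : Set (ι → L)) (hC : AlmostAffine K L C) :
    ∀ k : ℕ, ∀ T V : Submodule K (ι → K), T ≤ V → finrank K V ≤ finrank K T + k →
      ∀ c ∈ C,
        Nat.card (projImage K L C T) * Nat.card (projImage K L (subcode K L C T c) V) =
          Nat.card (projImage K L C V) := by
  intro k
  induction k with
  | zero =>
    intro T V hTV hdim c hc
    have hTVeq : T = V := eq_of_le_of_finrank_le hTV (by omega)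
    subst hTVeq
    have hone : projImage K L (subcode K L C T c) T = {Submodule.Quotient.mk c} := by
      ext x
      constructor
      · rintro ⟨d, hd, rfl⟩
        exact hd.2
      · rintro rfl
        exact ⟨c, ⟨hc, rfl⟩, rfl⟩
    have hsing : Nat.card ↑({Submodule.Quotient.mk c} :
        Set ((ι → L) ⧸ extScalars K L (stdPerp K T))) = 1 := by
      rw [Nat.card_coe_set_eq, Set.ncard_singleton]
    rw [hone, hsing, mul_one]
  | succ k ih =>
    intro T V hTV hdim c hc
    by_cases hk : finrank K V ≤ finrank K T + k
    · exact ih T V hTV hk c hc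
    have hlt : T < V := lt_of_le_of_ne hTV (by rintro rfl; omega)
    obtain ⟨x, hxV, hxT⟩ := SetLike.exists_of_lt hlt
    set U := T ⊔ span K {x} with hU
    have hTU : T ≤ U := le_sup_left
    have hxU : x ∈ U := (le_sup_right : span K {x} ≤ U) (mem_span_singleton_self x)
    have hUV : U ≤ V := sup_le hTV (by rwa [span_le, Set.singleton_subset_iff])
    have hUdim : finrank K U ≤ finrank K T + 1 := by
      have h1 := Submodule.finrank_sup_add_finrank_inf_eq T (span K {x})
      rw [← hU] at h1
      have h2 : finrank K (span K ({x} : Set (ι → K))) ≤ 1 := by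
        have h3 := finrank_span_le_card (R := K) ({x} : Set (ι → K))
        simpa using h3
      omega
    have hTltU : T < U := lt_of_le_of_ne hTU (by intro h; exact hxT (h ▸ hxU))
    have hUrank : finrank K T < finrank K U := Submodule.finrank_lt_finrank_of_lt hTltU
    have hVU : finrank K V ≤ finrank K U + k := by omega
    have hNUpos : 0 < Nat.card (projImage K L C U) := by
      obtain ⟨e, he⟩ := hC U
      rw [he]
      exact pow_pos Fintype.card_pos e
    set f := Nat.card (projImage K L C V) / Nat.card (projImage K L C U) with hf
    have huni : Nat.card (projImage K L (subcode K L C T c) V) =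
        Nat.card (⇑(qmap (L := L) hUV) '' projImage K L (subcode K L C T c) V) * f := by
      apply nat_card_eq_mul_of_uniform
      intro b hb
      rw [qmap_image] at hb
      obtain ⟨c', hc', rfl⟩ := hb
      have hseteq := fiber_eq_sub hTU hUV C hc'
      rw [hseteq]
      have hih := ih U V hUV hVU c' hc'.1
      rw [hf]
      exact (Nat.div_eq_of_eq_mul_right hNUpos hih.symm).symm
    rw [qmap_image] at huni
    have hhyp := hyperplane_step C hC hTU hUdim hc
    have hdvd := ih U V hUV hVU c hc
    calc Nat.card (projImage K L C T) * Nat.card (projImage K L (subcode K L C T c) V)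
        = (Nat.card (projImage K L C T) *
            Nat.card (projImage K L (subcode K L C T c) U)) * f := by rw [huni]; ring
      _ = Nat.card (projImage K L C U) * f := by rw [hhyp]
      _ = Nat.card (projImage K L C V) := by
          rw [hf]
          exact Nat.mul_div_cancel' ⟨_, hdvd.symm⟩

end Aux

/-- The `q`-matroid rank axioms (R1)–(R3). -/
def IsQMatroidRank {E : Type} [AddCommGroup E] [Module K E] (r : Submodule K E → ℕ) : Prop :=
  (∀ V : Submodule K E, r V ≤ finrank K V) ∧
  (∀ V W : Submodule K E, V ≤ W → r V ≤ r W) ∧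
  (∀ V W : Submodule K E, r (V ⊔ W) + r (V ⊓ W) ≤ r V + r W)

/-- an almost affine rank-metric code induces a q-matroid. -/
theorem stmt_6 {K L : Type} [Field K] [Fintype K] [Field L] [Fintype L] [Algebra K L]
    {n : ℕ} (C : Set (Fin n → L)) (hC : AlmostAffine K L C) :
    IsQMatroidRank K (rho K L C (ι := Fin n)) := by
  have hq : 1 < Fintype.card L := Fintype.one_lt_card
  refine ⟨?_, ?_, ?_⟩
  · -- (R1)
    intro V
    obtain ⟨e, he⟩ := hC V
    rw [rho, he, Nat.log_pow hq]
    have hle : Fintype.card L ^ e ≤ Fintype.card L ^ finrank K V := by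
      rw [← he]
      calc Nat.card (projImage K L C V)
          ≤ Nat.card ((Fin n → L) ⧸ extScalars K L (stdPerp K V)) :=
            Nat.card_le_card_of_injective Subtype.val Subtype.val_injective
        _ = Fintype.card L ^ finrank L ((Fin n → L) ⧸ extScalars K L (stdPerp K V)) :=
            nat_card_module (L := L) _
        _ = Fintype.card L ^ finrank K V := by rw [finrank_quot]
    exact (Nat.pow_le_pow_iff_right hq).mp hle
  · -- (R2)
    intro V W hVW
    rw [rho, rho]
    apply Nat.log_mono_right
    rw [← qmap_image hVW C, Nat.card_coe_set_eq, Nat.card_coe_set_eq]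
    exact Set.ncard_image_le (Set.toFinite _)
  · -- (R3)
    intro V W
    obtain ⟨eS, heS⟩ := hC (V ⊔ W)
    obtain ⟨eV, heV⟩ := hC V
    obtain ⟨eW, heW⟩ := hC W
    obtain ⟨eT, heT⟩ := hC (V ⊓ W)
    have hTV : V ⊓ W ≤ V := inf_le_left
    have hTW : V ⊓ W ≤ W := inf_le_right
    have hVS : V ≤ V ⊔ W := le_sup_left
    have hWS : W ≤ V ⊔ W := le_sup_right
    have hNTpos : 0 < Nat.card (projImage K L C (V ⊓ W)) := by
      rw [heT]; exact pow_pos Fintype.card_pos eT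
    set Φ := LinearMap.prod (qmap (L := L) hVS) (qmap (L := L) hWS) with hPhi
    have hΦinj : Function.Injective Φ := by
      intro a b hab
      obtain ⟨x, rfl⟩ := Submodule.Quotient.mk_surjective _ a
      obtain ⟨y, rfl⟩ := Submodule.Quotient.mk_surjective _ b
      have h1 := congrArg Prod.fst hab
      have h2 := congrArg Prod.snd hab
      simp only [hPhi, LinearMap.prod_apply, Function.prod_apply] at h1 h2
      rw [qmap_mk, qmap_mk] at h1 h2
      rw [Submodule.Quotient.eq] at h1 h2 ⊢
      rw [E_sup_eq]
      exact ⟨h1, h2⟩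
    set A' := ⇑Φ '' projImage K L C (V ⊔ W) with hA'
    have hcard : Nat.card (projImage K L C (V ⊔ W)) = Nat.card A' := by
      rw [hA', Nat.card_coe_set_eq, Nat.card_coe_set_eq,
        Set.ncard_image_of_injective _ hΦinj]
    set p2 : (((Fin n → L) ⧸ extScalars K L (stdPerp K V)) ×
        ((Fin n → L) ⧸ extScalars K L (stdPerp K W))) →
        ((Fin n → L) ⧸ extScalars K L (stdPerp K (V ⊓ W))) :=
      fun z => qmap (L := L) hTV z.1 with hp2
    have hΦmk : ∀ d : Fin n → L, Φ (Submodule.Quotient.mk d) =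
        (Submodule.Quotient.mk d, Submodule.Quotient.mk d) := by
      intro d
      simp only [hPhi, LinearMap.prod_apply, Function.prod_apply, qmap_mk]
    have hsum := nat_card_eq_sum_fibers A' p2
    set fins := (A'.toFinite.image p2).toFinset with hfins
    have hbound : ∀ b ∈ fins,
        Nat.card (projImage K L C (V ⊓ W)) * Nat.card (projImage K L C (V ⊓ W)) *
          Nat.card {z | z ∈ A' ∧ p2 z = b} ≤
        Nat.card (projImage K L C V) * Nat.card (projImage K L C W) := by
      intro b hb
      rw [hfins, Set.Finite.mem_toFinset] at hb
      obtain ⟨a, ha, rfl⟩ := hb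
      obtain ⟨x, ⟨c, hc, rfl⟩, rfl⟩ := ha
      have hb_eq : p2 (Φ (Submodule.Quotient.mk c)) =
          (Submodule.Quotient.mk c : (Fin n → L) ⧸ extScalars K L (stdPerp K (V ⊓ W))) := by
        rw [hΦmk]
        simp only [hp2]
        exact qmap_mk hTV c
      have hsub : {z | z ∈ A' ∧ p2 z = p2 (Φ (Submodule.Quotient.mk c))} ⊆
          (projImage K L (subcode K L C (V ⊓ W) c) V) ×ˢ
            (projImage K L (subcode K L C (V ⊓ W) c) W) := by
        rintro z ⟨⟨x', ⟨d, hd, rfl⟩, rfl⟩, hz2⟩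
        rw [hb_eq] at hz2
        rw [hΦmk] at hz2 ⊢
        have hz2' : (Submodule.Quotient.mk d :
            (Fin n → L) ⧸ extScalars K L (stdPerp K (V ⊓ W))) = Submodule.Quotient.mk c := by
          rw [← qmap_mk hTV d]; exact hz2
        have hdsub : d ∈ subcode K L C (V ⊓ W) c := ⟨hd, hz2'⟩
        exact ⟨⟨d, hdsub, rfl⟩, ⟨d, hdsub, rfl⟩⟩
      have hV := fiber_main C hC (finrank K V) (V ⊓ W) V hTV (Nat.le_add_left _ _) c hc
      have hW := fiber_main C hC (finrank K W) (V ⊓ W) W hTW (Nat.le_add_left _ _) c hc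
      calc Nat.card (projImage K L C (V ⊓ W)) * Nat.card (projImage K L C (V ⊓ W)) *
            Nat.card {z | z ∈ A' ∧ p2 z = p2 (Φ (Submodule.Quotient.mk c))}
          ≤ Nat.card (projImage K L C (V ⊓ W)) * Nat.card (projImage K L C (V ⊓ W)) *
            (Nat.card (projImage K L (subcode K L C (V ⊓ W) c) V) *
              Nat.card (projImage K L (subcode K L C (V ⊓ W) c) W)) := by
            have := le_trans (natcard_subset hsub) (le_of_eq (natcard_prod _ _))
            exact Nat.mul_le_mul_left _ this
        _ = (Nat.card (projImage K L C (V ⊓ W)) *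
              Nat.card (projImage K L (subcode K L C (V ⊓ W) c) V)) *
            (Nat.card (projImage K L C (V ⊓ W)) *
              Nat.card (projImage K L (subcode K L C (V ⊓ W) c) W)) := by ring
        _ = Nat.card (projImage K L C V) * Nat.card (projImage K L C W) := by rw [hV, hW]
    have hfinsle : fins.card ≤ Nat.card (projImage K L C (V ⊓ W)) := by
      have hss : p2 '' A' ⊆ projImage K L C (V ⊓ W) := by
        rintro b ⟨a, ha, rfl⟩
        obtain ⟨x, ⟨c, hc, rfl⟩, rfl⟩ := ha
        have : p2 (Φ (Submodule.Quotient.mk c)) =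
            (Submodule.Quotient.mk c : (Fin n → L) ⧸ extScalars K L (stdPerp K (V ⊓ W))) := by
          rw [hΦmk]
          simp only [hp2]
          exact qmap_mk hTV c
        rw [this]
        exact ⟨c, hc, rfl⟩
      calc fins.card = Nat.card (p2 '' A') := by
            rw [hfins, ← Set.ncard_eq_toFinset_card _ (A'.toFinite.image p2),
              ← Nat.card_coe_set_eq]
        _ ≤ Nat.card (projImage K L C (V ⊓ W)) := natcard_subset hss
    have hkey : Nat.card (projImage K L C (V ⊔ W)) * Nat.card (projImage K L C (V ⊓ W)) ≤
        Nat.card (projImage K L C V) * Nat.card (projImage K L C W) := by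
      have hmain : Nat.card (projImage K L C (V ⊓ W)) * (Nat.card (projImage K L C (V ⊓ W)) *
          (Nat.card (projImage K L C (V ⊔ W)))) ≤
          Nat.card (projImage K L C (V ⊓ W)) *
            (Nat.card (projImage K L C V) * Nat.card (projImage K L C W)) := by
        calc Nat.card (projImage K L C (V ⊓ W)) * (Nat.card (projImage K L C (V ⊓ W)) *
              Nat.card (projImage K L C (V ⊔ W)))
            = ∑ b ∈ fins, Nat.card (projImage K L C (V ⊓ W)) *
                Nat.card (projImage K L C (V ⊓ W)) * Nat.card {z | z ∈ A' ∧ p2 z = b} := by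
              rw [← Finset.mul_sum, ← hsum, ← hcard]; ring
          _ ≤ ∑ _b ∈ fins,
                Nat.card (projImage K L C V) * Nat.card (projImage K L C W) :=
              Finset.sum_le_sum hbound
          _ = fins.card * (Nat.card (projImage K L C V) * Nat.card (projImage K L C W)) := by
              rw [Finset.sum_const, smul_eq_mul]
          _ ≤ Nat.card (projImage K L C (V ⊓ W)) *
                (Nat.card (projImage K L C V) * Nat.card (projImage K L C W)) :=
              Nat.mul_le_mul_right _ hfinsle
      have h2 := Nat.le_of_mul_le_mul_left hmain hNTpos
      rw [Nat.mul_comm]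
      exact h2
    rw [heS, heT, heV, heW, ← pow_add, ← pow_add] at hkey
    have hexp := (Nat.pow_le_pow_iff_right hq).mp hkey
    simp only [rho, heS, heV, heW, heT, Nat.log_pow hq]
    omega
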